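/- Let 𝒯 : [0,1] → ℝ^d be differentiable and let h : ℝ^d → ℝ be differentiable. Let h̄ : [0,1] → ℝ be differentiable with h̄(1) = 0 and h̄(0) ≥ h(𝒯(0)), and let γ be an extended class-𝒦 function. If (d/dt) h(𝒯(t)) ≤ γ(h̄(t) − h(𝒯(t))) + h̄'(t) for all t ∈ [0,1], then h(𝒯(t)) ≤ h̄(t) for all t ∈ [0,1]; in particular the inequality constraint h(𝒯(1)) ≤ 0 is satisfied at the end of the generation process. -/

import Mathlib

open Set Filter

/-- A function `γ : ℝ → ℝ` is an extended class-𝒦 function if it is continuous,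
strictly increasing, and `γ 0 = 0`. -/
def IsExtendedClassK (γ : ℝ → ℝ) : Prop :=
  Continuous γ ∧ StrictMono γ ∧ γ 0 = 0

lemma aux_nonpos (f : ℝ → ℝ)
    (hd : DifferentiableOn ℝ f (Set.Icc 0 1))
    (h0 : f 0 ≤ 0)
    (hder : ∀ t ∈ Set.Icc (0:ℝ) 1, 0 ≤ f t → derivWithin f (Set.Icc 0 1) t ≤ 0) :
    ∀ t ∈ Set.Icc (0:ℝ) 1, f t ≤ 0 := by
  have hc : ContinuousOn f (Set.Icc 0 1) := hd.continuousOn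
  rintro t₁ ⟨ht₁0, ht₁1⟩
  by_contra hpos
  push_neg at hpos
  set S : Set ℝ := {t | t ∈ Set.Icc 0 t₁ ∧ f t ≤ 0} with hSdef
  have hS0 : (0:ℝ) ∈ S := ⟨⟨le_refl 0, ht₁0⟩, h0⟩
  have hSsub : S ⊆ Set.Icc 0 t₁ := fun x hx => hx.1
  have hSclosed : IsClosed S := by
    have : S = Set.Icc 0 t₁ ∩ f ⁻¹' Set.Iic 0 := by
      ext x; simp [hSdef, Set.mem_preimage, and_comm]

    rw [this]
    exact (hc.mono (Set.Icc_subset_Icc le_rfl ht₁1)).preimage_isClosed_of_isClosed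
      isClosed_Icc isClosed_Iic
  have hScpt : IsCompact S := (isCompact_Icc).of_isClosed_subset hSclosed hSsub
  have ht₀mem : sSup S ∈ S := hScpt.sSup_mem ⟨0, hS0⟩
  set t₀ := sSup S with ht₀def
  have ht₀0 : 0 ≤ t₀ := ht₀mem.1.1
  have ht₀1 : t₀ ≤ t₁ := ht₀mem.1.2
  have hft₀ : f t₀ ≤ 0 := ht₀mem.2
  have ht₀lt : t₀ < t₁ := by
    rcases lt_or_eq_of_le ht₀1 with h | h
    · exact h
    · rw [h] at hft₀; linarith
  have hposafter : ∀ t, t₀ < t → t ≤ t₁ → 0 < f t := by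
    intro t ht ht'
    by_contra hle
    push_neg at hle
    have : t ∈ S := ⟨⟨le_trans ht₀0 ht.le, ht'⟩, hle⟩
    exact absurd (le_csSup ⟨t₁, fun x hx => hx.1.2⟩ this) (not_le.mpr ht)
  have hanti : AntitoneOn f (Set.Icc t₀ t₁) := by
    apply antitoneOn_of_deriv_nonpos (convex_Icc t₀ t₁)
    · exact hc.mono (Set.Icc_subset_Icc ht₀0 ht₁1)
    · rw [interior_Icc]
      intro x hx
      have hx01 : x ∈ Set.Ioo (0:ℝ) 1 :=
        ⟨lt_of_le_of_lt ht₀0 hx.1, lt_of_lt_of_le hx.2 ht₁1⟩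
      exact ((hd x ⟨hx01.1.le, hx01.2.le⟩).differentiableAt
        (Icc_mem_nhds hx01.1 hx01.2)).differentiableWithinAt
    · rw [interior_Icc]
      intro x hx
      have hx01 : x ∈ Set.Ioo (0:ℝ) 1 :=
        ⟨lt_of_le_of_lt ht₀0 hx.1, lt_of_lt_of_le hx.2 ht₁1⟩
      have hnhds : Set.Icc (0:ℝ) 1 ∈ nhds x := Icc_mem_nhds hx01.1 hx01.2
      have := hder x ⟨hx01.1.le, hx01.2.le⟩ (hposafter x hx.1 hx.2.le).le
      rwa [derivWithin_of_mem_nhds hnhds] at this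
  have : f t₁ ≤ f t₀ :=
    hanti ⟨le_refl t₀, ht₀lt.le⟩ ⟨ht₀lt.le, le_refl t₁⟩ ht₀lt.le
  linarith

/-- Theorem 2 (prescribed-time satisfaction of an inequality constraint): with a
differentiable reference `hbar`, `hbar 1 = 0`, `hbar 0 ≥ h (traj 0)`, and the
differential inequality `(d/dt) h (traj t) ≤ γ (hbar t - h (traj t)) + hbar' t`
on `[0,1]`, one has `h (traj t) ≤ hbar t` on `[0,1]`; in particular
`h (traj 1) ≤ 0`. -/
theorem prescribed_time_inequality_constraint
    {d : ℕ}
    (traj : ℝ → EuclideanSpace ℝ (Fin d))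
    (htraj : DifferentiableOn ℝ traj (Set.Icc 0 1))
    (h : EuclideanSpace ℝ (Fin d) → ℝ)
    (hh : Differentiable ℝ h)
    (hbar : ℝ → ℝ)
    (hhbardiff : DifferentiableOn ℝ hbar (Set.Icc 0 1))
    (hhbar1 : hbar 1 = 0)
    (hhbar0 : h (traj 0) ≤ hbar 0)
    (γ : ℝ → ℝ) (hγ : IsExtendedClassK γ)
    (hineq : ∀ t ∈ Set.Icc (0:ℝ) 1,
      derivWithin (fun s => h (traj s)) (Set.Icc 0 1) t
        ≤ γ (hbar t - h (traj t)) + derivWithin hbar (Set.Icc 0 1) t) :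
    (∀ t ∈ Set.Icc (0:ℝ) 1, h (traj t) ≤ hbar t) ∧ h (traj 1) ≤ 0 := by
  obtain ⟨hγc, hγmono, hγ0⟩ := hγ
  have hcomp : DifferentiableOn ℝ (fun s => h (traj s)) (Set.Icc 0 1) :=
    hh.comp_differentiableOn htraj
  have hfd : DifferentiableOn ℝ (fun t => h (traj t) - hbar t) (Set.Icc 0 1) :=
    hcomp.sub hhbardiff
  have key : ∀ t ∈ Set.Icc (0:ℝ) 1, h (traj t) - hbar t ≤ 0 := by
    apply aux_nonpos _ hfd (by linarith)
    intro t ht hge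
    have hud : UniqueDiffWithinAt ℝ (Set.Icc (0:ℝ) 1) t :=
      (uniqueDiffOn_Icc one_pos) t ht
    rw [derivWithin_fun_sub (hcomp t ht) (hhbardiff t ht)]
    have h1 := hineq t ht
    have h2 : γ (hbar t - h (traj t)) ≤ γ 0 :=
      hγmono.monotone (by linarith)
    rw [hγ0] at h2
    linarith
  refine ⟨fun t ht => by linarith [key t ht], ?_⟩
  have := key 1 ⟨zero_le_one, le_refl 1⟩
  linarith
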